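/- For a finite group G with ideal frames R_1, R_2 (canonical PVM frames on l²(G)), the unitary frame change U_{1→2} of de la Hamette–Galley type and the operational localized frame change produce operationally equivalent outputs: for every state Ω on l²(G) ⊗ H_S and every effect of the form |l^{-1}⟩⟨l^{-1}| ⊗ F_S, tr[U_{1→2} Ω U_{1→2}* (|l^{-1}⟩⟨l^{-1}| ⊗ F_S)] = tr[Ω (|l⟩⟨l| ⊗ U_S(l)*F_S U_S(l))]. -/

import Mathlib

open scoped ComplexOrder Kronecker
open Matrix

private theorem frame_change_key
    {G : Type*} [Group G] [Fintype G] [DecidableEq G]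
    {n : Type*} [Fintype n] [DecidableEq n]
    (US : G →* Matrix.unitaryGroup n ℂ)
    (U12 : Matrix (G × n) (G × n) ℂ)
    (hchar : ∀ (ω : Matrix G G ℂ) (ρ : Matrix n n ℂ),
      U12 * (ω ⊗ₖ ρ) * star U12 =
        ∑ g : G, ∑ h : G, (ω g h) •
          ((Matrix.single g⁻¹ h⁻¹ (1 : ℂ)) ⊗ₖ
            ((US g : Matrix n n ℂ) * ρ * star (US h : Matrix n n ℂ))))
    (F : Matrix n n ℂ) (l g h : G) (i j : n) :
    (U12 * ((single g h (1:ℂ)) ⊗ₖ (single i j (1:ℂ))) * star U12 *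
      ((single l⁻¹ l⁻¹ (1:ℂ)) ⊗ₖ F)).trace =
    (((single g h (1:ℂ)) ⊗ₖ (single i j (1:ℂ))) *
      ((single l l (1:ℂ)) ⊗ₖ
        (star (US l : Matrix n n ℂ) * F * (US l : Matrix n n ℂ)))).trace := by
  have htr : ∀ (a b : G) (M : Matrix G G ℂ),
      (single a b (1:ℂ) * M).trace = M b a := by
    intro a b M
    simp [Matrix.trace, Matrix.diag, Matrix.mul_apply, single, ite_and,
      Finset.sum_ite_eq, Finset.sum_ite_eq']
  rw [hchar]
  have hcollapse : (∑ a : G, ∑ b : G, (single g h (1:ℂ) a b) •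
      ((single a⁻¹ b⁻¹ (1 : ℂ)) ⊗ₖ
        ((US a : Matrix n n ℂ) * single i j (1:ℂ) * star (US b : Matrix n n ℂ)))) =
      (single g⁻¹ h⁻¹ (1 : ℂ)) ⊗ₖ
        ((US g : Matrix n n ℂ) * single i j (1:ℂ) * star (US h : Matrix n n ℂ)) := by
    simp [single, ite_and, ite_smul, Finset.sum_ite_eq, Finset.sum_ite_eq']
  rw [hcollapse, ← mul_kronecker_mul, ← mul_kronecker_mul, trace_kronecker, trace_kronecker,
    htr, htr]
  by_cases hgl : g = l
  · by_cases hhl : h = l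
    · rw [hgl, hhl]
      rw [single_apply_same, single_apply_same, one_mul, one_mul]
      set E := single i j (1:ℂ)
      calc ((US l : Matrix n n ℂ) * E * star (US l : Matrix n n ℂ) * F).trace
          = ((US l : Matrix n n ℂ) * E * (star (US l : Matrix n n ℂ) * F)).trace := by
            rw [mul_assoc]
        _ = ((star (US l : Matrix n n ℂ) * F) * (US l : Matrix n n ℂ) * E).trace := by
            rw [Matrix.trace_mul_cycle]
        _ = (E * (star (US l : Matrix n n ℂ) * F * (US l : Matrix n n ℂ))).trace := by
            rw [Matrix.trace_mul_comm]
    · have h1 : single l⁻¹ l⁻¹ (1:ℂ) h⁻¹ g⁻¹ = 0 := by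
        simp [single, _root_.inv_inj, hhl, Ne.symm hhl]
      have h2 : single l l (1:ℂ) h g = 0 := by
        simp [single, hhl, Ne.symm hhl]
      rw [h1, h2, zero_mul, zero_mul]
  · have h1 : single l⁻¹ l⁻¹ (1:ℂ) h⁻¹ g⁻¹ = 0 := by
      simp [single, _root_.inv_inj, hgl, Ne.symm hgl]
    have h2 : single l l (1:ℂ) h g = 0 := by
      simp [single, hgl, Ne.symm hgl]
    rw [h1, h2, zero_mul, zero_mul]

/-- for a finite group `G` with ideal frames (canonical PVM frames on
`l²(G)`, representation `U(g)|h⟩ = |hg⁻¹⟩`, frame PVM `P(g) = |g⁻¹⟩⟨g⁻¹|`), the unitary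
frame change `U_{1→2}` of de la Hamette–Galley type — characterized on product states by
`U_{1→2}(ω ⊗ ρ)U_{1→2}* = Σ_{g,h} ⟨g|ω|h⟩ |g⁻¹⟩⟨h⁻¹| ⊗ U_S(g) ρ U_S(h)*` — and the
operational localized frame change produce operationally equivalent outputs: for every
state `Ω` on `l²(G) ⊗ H_S`, every effect `F_S` and every `l ∈ G`,
`tr[U_{1→2} Ω U_{1→2}* (|l⁻¹⟩⟨l⁻¹| ⊗ F_S)] = tr[Ω (|l⟩⟨l| ⊗ U_S(l)* F_S U_S(l))]`. -/
theorem frame_change_operational_equivalence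
    {G : Type*} [Group G] [Fintype G] [DecidableEq G]
    {n : Type*} [Fintype n] [DecidableEq n]
    (US : G →* Matrix.unitaryGroup n ℂ)
    (U12 : Matrix (G × n) (G × n) ℂ)
    (hU12a : U12 * star U12 = 1) (hU12b : star U12 * U12 = 1)
    (hchar : ∀ (ω : Matrix G G ℂ) (ρ : Matrix n n ℂ),
      U12 * (ω ⊗ₖ ρ) * star U12 =
        ∑ g : G, ∑ h : G, (ω g h) •
          ((Matrix.single g⁻¹ h⁻¹ (1 : ℂ)) ⊗ₖ
            ((US g : Matrix n n ℂ) * ρ * star (US h : Matrix n n ℂ))))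
    (Ω : Matrix (G × n) (G × n) ℂ) (hΩ : Ω.PosSemidef) (hΩtr : Ω.trace = 1)
    (F : Matrix n n ℂ) (hF : F.PosSemidef) (hF1 : ((1 : Matrix n n ℂ) - F).PosSemidef)
    (l : G) :
    (U12 * Ω * star U12 * ((Matrix.single l⁻¹ l⁻¹ (1 : ℂ)) ⊗ₖ F)).trace =
      (Ω * ((Matrix.single l l (1 : ℂ)) ⊗ₖ
        (star (US l : Matrix n n ℂ) * F * (US l : Matrix n n ℂ)))).trace := by
  have hdec : Ω = ∑ p : G × n, ∑ q : G × n,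
      (Ω p q) • ((single p.1 q.1 (1:ℂ)) ⊗ₖ (single p.2 q.2 (1:ℂ))) := by
    ext ⟨a,b⟩ ⟨c,d⟩
    simp [Matrix.sum_apply, single, ite_and, Fintype.sum_prod_type,
      Finset.sum_ite_eq, Finset.sum_ite_eq']
  conv_lhs => rw [hdec]
  conv_rhs => rw [hdec]
  rw [Finset.mul_sum, Finset.sum_mul]
  simp only [Finset.mul_sum, Finset.sum_mul, Matrix.trace_sum]
  refine Finset.sum_congr rfl fun p _ => Finset.sum_congr rfl fun q _ => ?_
  simp only [Matrix.mul_smul, Matrix.smul_mul, Matrix.trace_smul]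
  congr 1
  exact frame_change_key US U12 hchar F l p.1 q.1 p.2 q.2
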